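/- The LF-mapping restricted to a fixed character σ is monotone: if (σ,i) and (σ,i') are pairs in 𝓛 with i < i', then LF(σ,i) ≤ LF(σ,i'), with equality only when both pairs are of (m:1)-type mapped to the same F-entry. -/
import Mathlib


/-- Monotonicity of the LF-mapping for a fixed character.  Abstract model of
the FM-index of alignment: suffixes of the `m` strings are pairs `(j,q)`;
`valid s` says `s` is a suffix appearing in the SAA, `str s` is its string,
`ent s` is the index of its SAA entry (entries are sorted lexicographically
and distinct entries contain distinct strings); for an `extendable` suffix
(one not starting at the beginning), `prev s` is the suffix extended to the
left by one character `lastChar s`.  `Lpair σ i` means `(σ,i) ∈ 𝓛`, i.e.,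
`σ ∈ L[i]`, and `LF σ (ent s) = ent (prev s)` (well-defined by Lemma 1).

Claim: if `(σ,i)` and `(σ,i')` are pairs in `𝓛` with `i < i'`, then
`LF σ i ≤ LF σ i'`, with equality only when both pairs are of (m:1)-type
mapped to the same `F`-entry. -/
theorem stmt17 {α : Type*} [LinearOrder α] (m N : ℕ)
    (valid : Fin m × ℕ → Prop) (str : Fin m × ℕ → List α)
    (ent : Fin m × ℕ → ℕ) (extendable : Fin m × ℕ → Prop)
    (prev : Fin m × ℕ → Fin m × ℕ) (lastChar : Fin m × ℕ → α)
    (LF : α → ℕ → ℕ) (Lpair : α → ℕ → Prop)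
    (hentN : ∀ s, valid s → ent s ≤ N)
    (hprevvalid : ∀ s, valid s → extendable s → valid (prev s))
    (hprevstr : ∀ s, valid s → extendable s →
        str (prev s) = lastChar s :: str s)
    (hsorted : ∀ s t, valid s → valid t → ent s ≤ ent t → str s ≤ str t)
    (hdistinct : ∀ s t, valid s → valid t → ent s ≠ ent t → str s ≠ str t)
    (hLF : ∀ s, valid s → extendable s → LF (lastChar s) (ent s) = ent (prev s))
    (hLpair : ∀ σ i, Lpair σ i ↔
        ∃ s, valid s ∧ extendable s ∧ ent s = i ∧ lastChar s = σ) :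
    ∀ (σ : α) (i i' : ℕ), Lpair σ i → Lpair σ i' → i < i' →
      LF σ i ≤ LF σ i' ∧
      (LF σ i = LF σ i' →
        (∃ k, k ≠ i ∧ Lpair σ k ∧ LF σ k = LF σ i) ∧
        (∃ k, k ≠ i' ∧ Lpair σ k ∧ LF σ k = LF σ i')) := by
  intro σ i i' hi hi' hlt
  obtain ⟨s, hsv, hse, hsi, hsσ⟩ := (hLpair σ i).1 hi
  obtain ⟨t, htv, hte, hti, htσ⟩ := (hLpair σ i').1 hi'
  have hLFs : LF σ i = ent (prev s) := by
    rw [← hsσ, ← hsi]; exact hLF s hsv hse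
  have hLFt : LF σ i' = ent (prev t) := by
    rw [← htσ, ← hti]; exact hLF t htv hte
  have hstlt : str s < str t := by
    refine lt_of_le_of_ne (hsorted s t hsv htv (by omega)) ?_
    exact hdistinct s t hsv htv (by omega)
  have hpsv := hprevvalid s hsv hse
  have hptv := hprevvalid t htv hte
  have hmain : LF σ i ≤ LF σ i' := by
    rw [hLFs, hLFt]
    by_contra h
    push_neg at h
    have h1 : str (prev t) ≤ str (prev s) :=
      hsorted _ _ hptv hpsv (le_of_lt h)
    have h2 : str (prev s) ≤ str (prev t) := by
      rw [hprevstr s hsv hse, hprevstr t htv hte, hsσ, htσ]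
      exact List.cons_le_cons σ (le_of_lt hstlt)
    have h3 : str (prev s) = str (prev t) := le_antisymm h2 h1
    rw [hprevstr s hsv hse, hprevstr t htv hte] at h3
    exact absurd (List.cons.injEq _ _ _ _ ▸ h3 : _ ∧ _).2 (ne_of_lt hstlt)
  refine ⟨hmain, fun heq => ⟨⟨i', by omega, hi', heq.symm⟩, ⟨i, by omega, hi, heq⟩⟩⟩
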